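/- arXiv:2409.08382 — 5 statements merged into one kernel-verified Lean document; each statement's English description precedes it below -/
import Mathlib

section
/- Suppose there exist constants M > 0 and λ > 0 such that for every x ∈ ℝⁿ there is a control sequence u_x : ℕ → ℝᵐ satisfying R − r(Ψ(k, x, u_x), u_x(k)) ≤ M‖x‖² e^{−λk} for all k ≥ 0 (exponential stabilizability). Then for every discount factor γ ∈ (0,1) and every x ∈ ℝⁿ, R/(1−γ) − V_γ(x) ≤ (M/(1−e^{−λ})) ‖x‖². -/
set_option autoImplicit false

open scoped Matrix

noncomputable section

/-- The flow map of the discrete control system `x_{k+1} = f(x_k, u_k)`. -/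
def flow {X U : Type*} (f : X → U → X) (x₀ : X) (u : ℕ → U) : ℕ → X
  | 0 => x₀
  | k + 1 => f (flow f x₀ u k) (u k)

/-- The `γ`-discounted objective `J_γ^u(x₀) = Σ_k γ^k r(Ψ(k,x₀,u), u(k))`. -/
def Jobj {X U : Type*} (f : X → U → X) (r : X → U → ℝ) (γ : ℝ) (x : X) (u : ℕ → U) : ℝ :=
  ∑' k : ℕ, γ ^ k * r (flow f x u k) (u k)

/-- The optimal value function `V_γ(x) = sup_u J_γ^u(x)`, the supremum taken over
control sequences for which the discounted objective is well defined. -/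
def Vopt {X U : Type*} (f : X → U → X) (r : X → U → ℝ) (γ : ℝ) (x : X) : ℝ :=
  ⨆ u : {u : ℕ → U // Summable fun k : ℕ => γ ^ k * r (flow f x u k) (u k)},
    Jobj f r γ x u.1

/-- If the system is exponentially stabilizable
(`R − r(Ψ(k,x,u_x), u_x(k)) ≤ M‖x‖² e^{−λk}`), then for every discount factor
`γ ∈ (0,1)` and every state `x`, `R/(1−γ) − V_γ(x) ≤ (M/(1−e^{−λ}))‖x‖²`. -/
theorem exponential_stabilizability_value_bound
    {n m : ℕ}
    (f : EuclideanSpace ℝ (Fin n) → EuclideanSpace ℝ (Fin m) → EuclideanSpace ℝ (Fin n))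
    (Q : Matrix (Fin n) (Fin n) ℝ) (hQ : Q.PosDef)
    (R : ℝ) (hR : 0 < R)
    (r : EuclideanSpace ℝ (Fin n) → EuclideanSpace ℝ (Fin m) → ℝ)
    (hr : ∀ x u, r x u = R - x ⬝ᵥ Q.mulVec x)
    (M lam : ℝ) (hM : 0 < M) (hlam : 0 < lam)
    (hstab : ∀ x : EuclideanSpace ℝ (Fin n), ∃ u : ℕ → EuclideanSpace ℝ (Fin m),
      ∀ k : ℕ, R - r (flow f x u k) (u k) ≤ M * ‖x‖ ^ 2 * Real.exp (-lam * k))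
    (γ : ℝ) (hγ : γ ∈ Set.Ioo (0 : ℝ) 1) (x : EuclideanSpace ℝ (Fin n)) :
    R / (1 - γ) - Vopt f r γ x ≤ (M / (1 - Real.exp (-lam))) * ‖x‖ ^ 2 := by
  obtain ⟨hγ0, hγ1⟩ := hγ
  have hqnn : ∀ y : EuclideanSpace ℝ (Fin n), 0 ≤ y ⬝ᵥ Q.mulVec y := by
    intro y
    have := hQ.posSemidef.dotProduct_mulVec_nonneg y
    simpa using this
  have hrle : ∀ y u', r y u' ≤ R := by
    intro y u'; rw [hr]; linarith [hqnn y]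
  have he : Real.exp (-lam) < 1 := by
    rw [Real.exp_lt_one_iff]; linarith
  have he0 : (0:ℝ) ≤ Real.exp (-lam) := (Real.exp_pos _).le
  have hgeo : Summable fun k : ℕ => γ ^ k * R :=
    (summable_geometric_of_lt_one hγ0.le hγ1).mul_right R
  have hbdd : BddAbove (Set.range fun u : {u : ℕ → EuclideanSpace ℝ (Fin m) //
      Summable fun k : ℕ => γ ^ k * r (flow f x u k) (u k)} => Jobj f r γ x u.1) := by
    refine ⟨R / (1 - γ), ?_⟩
    rintro _ ⟨⟨u, hu⟩, rfl⟩
    have hle : Jobj f r γ x u ≤ ∑' k : ℕ, γ ^ k * R := by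
      refine Summable.tsum_le_tsum (fun k => ?_) hu hgeo
      exact mul_le_mul_of_nonneg_left (hrle _ _) (pow_nonneg hγ0.le k)
    calc Jobj f r γ x u ≤ ∑' k : ℕ, γ ^ k * R := hle
      _ = (1 - γ)⁻¹ * R := by rw [tsum_mul_right, tsum_geometric_of_lt_one hγ0.le hγ1, mul_comm]
      _ = R / (1 - γ) := by rw [div_eq_mul_inv, mul_comm]
  obtain ⟨u, hu⟩ := hstab x
  -- summability of the objective for u
  have hexp : ∀ k : ℕ, Real.exp (-lam * k) = Real.exp (-lam) ^ k := by
    intro k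
    rw [← Real.exp_nat_mul]; ring_nf
  have hsumexp : Summable fun k : ℕ => M * ‖x‖ ^ 2 * Real.exp (-lam) ^ k :=
    (summable_geometric_of_lt_one he0 he).mul_left _
  have hterm : ∀ k : ℕ, γ ^ k * (R - r (flow f x u k) (u k)) ≤
      M * ‖x‖ ^ 2 * Real.exp (-lam) ^ k := by
    intro k
    have h1 : 0 ≤ R - r (flow f x u k) (u k) := by
      rw [hr]; linarith [hqnn (flow f x u k)]
    have h2 : γ ^ k * (R - r (flow f x u k) (u k)) ≤ R - r (flow f x u k) (u k) := by
      have : γ ^ k ≤ 1 := pow_le_one₀ hγ0.le hγ1.le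
      nlinarith
    calc γ ^ k * (R - r (flow f x u k) (u k)) ≤ R - r (flow f x u k) (u k) := h2
      _ ≤ M * ‖x‖ ^ 2 * Real.exp (-lam * k) := hu k
      _ = M * ‖x‖ ^ 2 * Real.exp (-lam) ^ k := by rw [hexp]
  have htermnn : ∀ k : ℕ, 0 ≤ γ ^ k * (R - r (flow f x u k) (u k)) := by
    intro k
    have h1 : 0 ≤ R - r (flow f x u k) (u k) := by
      rw [hr]; linarith [hqnn (flow f x u k)]
    exact mul_nonneg (pow_nonneg hγ0.le k) h1
  have hsumdiff : Summable fun k : ℕ => γ ^ k * (R - r (flow f x u k) (u k)) :=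
    Summable.of_nonneg_of_le htermnn hterm hsumexp
  have hsumr : Summable fun k : ℕ => γ ^ k * r (flow f x u k) (u k) := by
    have : (fun k : ℕ => γ ^ k * r (flow f x u k) (u k)) =
        fun k => γ ^ k * R - γ ^ k * (R - r (flow f x u k) (u k)) := by
      funext k; ring
    rw [this]
    exact hgeo.sub hsumdiff
  have hV : Jobj f r γ x u ≤ Vopt f r γ x := le_ciSup hbdd ⟨u, hsumr⟩
  have hsum1 : ∑' k : ℕ, γ ^ k * (R - r (flow f x u k) (u k)) ≤
      M / (1 - Real.exp (-lam)) * ‖x‖ ^ 2 := by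
    calc ∑' k : ℕ, γ ^ k * (R - r (flow f x u k) (u k))
        ≤ ∑' k : ℕ, M * ‖x‖ ^ 2 * Real.exp (-lam) ^ k :=
          Summable.tsum_le_tsum hterm hsumdiff hsumexp
      _ = M * ‖x‖ ^ 2 * (1 - Real.exp (-lam))⁻¹ := by
          rw [tsum_mul_left, tsum_geometric_of_lt_one he0 he]
      _ = M / (1 - Real.exp (-lam)) * ‖x‖ ^ 2 := by ring
  have hkey : R / (1 - γ) - Jobj f r γ x u =
      ∑' k : ℕ, γ ^ k * (R - r (flow f x u k) (u k)) := by
    have h1 : R / (1 - γ) = ∑' k : ℕ, γ ^ k * R := by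
      rw [tsum_mul_right, tsum_geometric_of_lt_one hγ0.le hγ1, div_eq_mul_inv, mul_comm]
    rw [h1, Jobj, ← Summable.tsum_sub hgeo hsumr]
    congr 1; funext k; ring
  linarith [hsum1, hV, hkey ▸ (le_refl (R / (1 - γ) - Jobj f r γ x u))]
end
end

section
/- Assume: (i) for each x ∈ ℝⁿ there is an optimal control sequence u⋆_x attaining V_γ(x) and satisfying the dynamic-programming identity V_γ(x) = r(x, u⋆_x(0)) + γ V_γ(f(x, u⋆_x(0))); (ii) there is a constant a_V > 0 such that R/(1−γ) − V_γ(x) ≤ a_V ‖x‖² for all x ∈ ℝⁿ and all γ ∈ (0,1). Set γ⋆ = a_V/(a_V + λ_min(Q)). Then for every γ ∈ (γ⋆, 1), the constant c = λ_min(Q) − ((1−γ)/γ) a_V is strictly positive and, for every x ∈ ℝⁿ with next state y = f(x, u⋆_x(0)), one has V_γ(x) − V_γ(y) ≤ −c‖x‖². -/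
set_option autoImplicit false

open scoped Matrix Pointwise

noncomputable section

lemma quad_lower {n : ℕ} (Q : Matrix (Fin n) (Fin n) ℝ) (hQ : Q.PosDef)
    (lamMin : ℝ) (hlamMin : IsLeast (Set.range hQ.isHermitian.eigenvalues) lamMin)
    (x : EuclideanSpace ℝ (Fin n)) :
    lamMin * ‖x‖ ^ 2 ≤ x ⬝ᵥ Q.mulVec x := by
  set B : Matrix (Fin n) (Fin n) ℝ := Q - lamMin • 1 with hB
  have hQt : Qᵀ = Q := by
    have := hQ.isHermitian.eq
    rwa [Matrix.conjTranspose_eq_transpose_of_trivial] at this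
  have hBh : B.IsHermitian := by
    simp [Matrix.IsHermitian, hB, Matrix.conjTranspose_sub, Matrix.conjTranspose_smul,
      Matrix.conjTranspose_eq_transpose_of_trivial, hQt]
  have hspec : spectrum ℝ B = spectrum ℝ Q - ({lamMin} : Set ℝ) := by
    rw [show spectrum ℝ Q - ({lamMin} : Set ℝ) = _ from
      spectrum.sub_singleton_eq (R := ℝ) (A := Matrix (Fin n) (Fin n) ℝ) Q lamMin,
      hB, Algebra.algebraMap_eq_smul_one]
  have hBpsd : B.PosSemidef := by
    apply (Matrix.IsHermitian.posSemidef_iff_eigenvalues_nonneg hBh).mpr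
    intro i
    have hmem : hBh.eigenvalues i ∈ spectrum ℝ B := hBh.eigenvalues_mem_spectrum_real i
    rw [hspec] at hmem
    obtain ⟨μ, hμ, ν, hν, hsum⟩ := hmem
    rw [Matrix.IsHermitian.spectrum_real_eq_range_eigenvalues hQ.isHermitian] at hμ
    have := hlamMin.2 hμ
    simp only [Set.mem_singleton_iff] at hν
    subst hν
    rw [← hsum]; simpa using this
  have key := Matrix.PosSemidef.dotProduct_mulVec_nonneg hBpsd (x : Fin n → ℝ)
  have hxx : (x : Fin n → ℝ) ⬝ᵥ x = ‖x‖ ^ 2 := by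
    rw [EuclideanSpace.norm_eq]
    rw [Real.sq_sqrt (by positivity)]
    simp [dotProduct, sq]
  have hexp : (star (x : Fin n → ℝ)) ⬝ᵥ B.mulVec x
      = x ⬝ᵥ Q.mulVec x - lamMin * (x ⬝ᵥ x) := by
    simp [hB, Matrix.sub_mulVec, Matrix.smul_mulVec, dotProduct_sub,
      dotProduct_smul, smul_eq_mul]
  rw [hexp] at key
  rw [hxx] at key
  linarith

/-- Under attainment of the optimum, the dynamic-programming identity, and the
quadratic upper bound `R/(1−γ) − V_γ(x) ≤ a_V‖x‖²`, for every discount factor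
`γ ∈ (γ⋆, 1)` with `γ⋆ = a_V/(a_V + λ_min(Q))` the constant
`c = λ_min(Q) − ((1−γ)/γ)a_V` is positive and `V_γ(x) − V_γ(y) ≤ −c‖x‖²`
where `y = f(x, u⋆_x(0))`. -/
theorem value_decrease_along_optimal_step
    {n m : ℕ}
    (f : EuclideanSpace ℝ (Fin n) → EuclideanSpace ℝ (Fin m) → EuclideanSpace ℝ (Fin n))
    (Q : Matrix (Fin n) (Fin n) ℝ) (hQ : Q.PosDef)
    (R : ℝ) (hR : 0 < R)
    (r : EuclideanSpace ℝ (Fin n) → EuclideanSpace ℝ (Fin m) → ℝ)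
    (hr : ∀ x u, r x u = R - x ⬝ᵥ Q.mulVec x)
    (lamMin : ℝ) (hlamMin : IsLeast (Set.range hQ.isHermitian.eigenvalues) lamMin)
    (aV : ℝ) (haV : 0 < aV)
    -- (ii): quadratic upper bound for all states and all discount factors
    (hbound : ∀ γ' ∈ Set.Ioo (0 : ℝ) 1, ∀ x : EuclideanSpace ℝ (Fin n),
      R / (1 - γ') - Vopt f r γ' x ≤ aV * ‖x‖ ^ 2)
    (γ : ℝ) (hγ : γ ∈ Set.Ioo (aV / (aV + lamMin)) 1)
    -- (i): an optimal control sequence `u⋆_x` attaining `V_γ(x)` and satisfying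
    -- the dynamic-programming identity
    (ustar : EuclideanSpace ℝ (Fin n) → ℕ → EuclideanSpace ℝ (Fin m))
    (hattain : ∀ x, Vopt f r γ x = Jobj f r γ x (ustar x))
    (hDP : ∀ x, Vopt f r γ x
      = r x (ustar x 0) + γ * Vopt f r γ (f x (ustar x 0))) :
    0 < lamMin - ((1 - γ) / γ) * aV ∧
      ∀ x : EuclideanSpace ℝ (Fin n),
        Vopt f r γ x - Vopt f r γ (f x (ustar x 0))
          ≤ -(lamMin - ((1 - γ) / γ) * aV) * ‖x‖ ^ 2 := by
  obtain ⟨i, hi⟩ := hlamMin.1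
  have hlamPos : 0 < lamMin := hi ▸ hQ.eigenvalues_pos i
  have hden : 0 < aV + lamMin := by linarith
  have hγpos : 0 < γ := lt_trans (by positivity) hγ.1
  have hγ1 : γ < 1 := hγ.2
  have hkey : aV < γ * (aV + lamMin) := (div_lt_iff₀ hden).mp hγ.1
  have hc : 0 < lamMin - ((1 - γ) / γ) * aV := by
    have : ((1 - γ) / γ) * aV < lamMin := by
      rw [div_mul_eq_mul_div, div_lt_iff₀ hγpos]
      nlinarith
    linarith
  refine ⟨hc, fun x => ?_⟩
  set y := f x (ustar x 0) with hy
  set Vx := Vopt f r γ x with hVx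
  set Vy := Vopt f r γ y with hVy
  set q := x ⬝ᵥ Q.mulVec x with hqdef
  set s := ‖x‖ ^ 2 with hsdef
  have hspos : 0 ≤ s := by positivity
  have hq : lamMin * s ≤ q := quad_lower Q hQ lamMin hlamMin x
  have hDPx : Vx = R - q + γ * Vy := by
    rw [hVx, hDP x, hr x (ustar x 0)]
  have hbx : R / (1 - γ) - Vx ≤ aV * s := hbound γ ⟨hγpos, hγ1⟩ x
  have h1γ : 0 < 1 - γ := by linarith
  have hRe : R ≤ (aV * s + Vx) * (1 - γ) := by
    rw [← div_le_iff₀ h1γ]; linarith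
  rw [← mul_le_mul_iff_right₀ hγpos]
  have hrhs : γ * (-(lamMin - ((1 - γ) / γ) * aV) * s)
      = -(γ * lamMin) * s + (1 - γ) * aV * s := by
    field_simp
    ring
  rw [hrhs]
  nlinarith [mul_nonneg (mul_nonneg h1γ.le hlamPos.le) hspos]
end
end

section
/- Assume: (i) for each x ∈ ℝⁿ there is an optimal control sequence u⋆_x attaining V_γ(x), and along each optimal trajectory x_{k+1} = f(x_k, u⋆(k)) the dynamic-programming identity V_γ(x_k) = r(x_k, u⋆(k)) + γ V_γ(x_{k+1}) holds for every k; (ii) there is a constant a_V > 0 such that λ_min(Q)‖x‖² ≤ R/(1−γ) − V_γ(x) ≤ a_V ‖x‖² for all x ∈ ℝⁿ; (iii) there is a constant c with 0 < c < a_V such that V_γ(x_k) − V_γ(x_{k+1}) ≤ −c‖x_k‖² along every optimal trajectory. Then, with λ = −ln(1 − c/a_V), every optimal trajectory satisfies ‖Ψ(k, x, u⋆_x)‖² ≤ (a_V/λ_min(Q)) ‖x‖² e^{−λ k} for all k ≥ 0; in particular the origin is asymptotically (indeed exponentially) stable under the optimal policy. -/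
set_option autoImplicit false

open scoped Matrix

noncomputable section

/-- Under the dynamic-programming identity along optimal trajectories, the quadratic
sandwich bounds `λ_min(Q)‖x‖² ≤ R/(1−γ) − V_γ(x) ≤ a_V‖x‖²`, and the strict decrease
`V_γ(x_k) − V_γ(x_{k+1}) ≤ −c‖x_k‖²` with `0 < c < a_V`, every optimal trajectory
satisfies `‖Ψ(k,x,u⋆_x)‖² ≤ (a_V/λ_min(Q))‖x‖² e^{−λk}` with `λ = −ln(1 − c/a_V)`:
the origin is exponentially (hence asymptotically) stable under the optimal policy. -/
theorem optimal_policy_exponential_stability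
    {n m : ℕ}
    (f : EuclideanSpace ℝ (Fin n) → EuclideanSpace ℝ (Fin m) → EuclideanSpace ℝ (Fin n))
    (Q : Matrix (Fin n) (Fin n) ℝ) (hQ : Q.PosDef)
    (R : ℝ) (hR : 0 < R)
    (r : EuclideanSpace ℝ (Fin n) → EuclideanSpace ℝ (Fin m) → ℝ)
    (hr : ∀ x u, r x u = R - x ⬝ᵥ Q.mulVec x)
    (lamMin : ℝ) (hlamMin : IsLeast (Set.range hQ.isHermitian.eigenvalues) lamMin)
    (γ : ℝ) (hγ : γ ∈ Set.Ioo (0 : ℝ) 1)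
    -- (i): optimal control sequences attaining the value and the
    -- dynamic-programming identity along every optimal trajectory
    (ustar : EuclideanSpace ℝ (Fin n) → ℕ → EuclideanSpace ℝ (Fin m))
    (hattain : ∀ x, Vopt f r γ x = Jobj f r γ x (ustar x))
    (hDP : ∀ x, ∀ k : ℕ,
      Vopt f r γ (flow f x (ustar x) k)
        = r (flow f x (ustar x) k) (ustar x k)
          + γ * Vopt f r γ (flow f x (ustar x) (k + 1)))
    -- (ii): quadratic sandwich bounds
    (aV : ℝ) (haV : 0 < aV)
    (hsandwich : ∀ x : EuclideanSpace ℝ (Fin n),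
      lamMin * ‖x‖ ^ 2 ≤ R / (1 - γ) - Vopt f r γ x ∧
        R / (1 - γ) - Vopt f r γ x ≤ aV * ‖x‖ ^ 2)
    -- (iii): strict decrease along every optimal trajectory
    (c : ℝ) (hc0 : 0 < c) (hcaV : c < aV)
    (hdec : ∀ x : EuclideanSpace ℝ (Fin n), ∀ k : ℕ,
      Vopt f r γ (flow f x (ustar x) k) - Vopt f r γ (flow f x (ustar x) (k + 1))
        ≤ -c * ‖flow f x (ustar x) k‖ ^ 2)
    (lam : ℝ) (hlam : lam = -Real.log (1 - c / aV)) :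
    ∀ x : EuclideanSpace ℝ (Fin n), ∀ k : ℕ,
      ‖flow f x (ustar x) k‖ ^ 2 ≤ (aV / lamMin) * ‖x‖ ^ 2 * Real.exp (-lam * k) := by
  intro x
  obtain ⟨i, hi⟩ := hlamMin.1
  have hlamMin_pos : 0 < lamMin := hi ▸ hQ.eigenvalues_pos i
  have hρ : 0 < 1 - c / aV := by
    have : c / aV < 1 := (div_lt_one haV).2 hcaV
    linarith
  have hρ1 : 1 - c / aV < 1 := by
    have : 0 < c / aV := div_pos hc0 haV
    linarith
  have key : ∀ k : ℕ, R / (1 - γ) - Vopt f r γ (flow f x (ustar x) k)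
      ≤ (1 - c / aV) ^ k * (aV * ‖x‖ ^ 2) := by
    intro k
    induction k with
    | zero => simpa [flow] using (hsandwich x).2
    | succ k ih =>
      have h1 := hdec x k
      have h2 := (hsandwich (flow f x (ustar x) k)).2
      have hstep : R / (1 - γ) - Vopt f r γ (flow f x (ustar x) (k + 1))
          ≤ (1 - c / aV) * (R / (1 - γ) - Vopt f r γ (flow f x (ustar x) k)) := by
        have hc' : c / aV * (R / (1 - γ) - Vopt f r γ (flow f x (ustar x) k))
            ≤ c * ‖flow f x (ustar x) k‖ ^ 2 := by
          have := mul_le_mul_of_nonneg_left h2 (le_of_lt (div_pos hc0 haV))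
          calc c / aV * (R / (1 - γ) - Vopt f r γ (flow f x (ustar x) k))
              ≤ c / aV * (aV * ‖flow f x (ustar x) k‖ ^ 2) := this
            _ = c * ‖flow f x (ustar x) k‖ ^ 2 := by
                field_simp
        nlinarith
      calc R / (1 - γ) - Vopt f r γ (flow f x (ustar x) (k + 1))
          ≤ (1 - c / aV) * (R / (1 - γ) - Vopt f r γ (flow f x (ustar x) k)) := hstep
        _ ≤ (1 - c / aV) * ((1 - c / aV) ^ k * (aV * ‖x‖ ^ 2)) :=
            mul_le_mul_of_nonneg_left ih hρ.le
        _ = (1 - c / aV) ^ (k + 1) * (aV * ‖x‖ ^ 2) := by ring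
  intro k
  have hexp : Real.exp (-lam * (k : ℝ)) = (1 - c / aV) ^ k := by
    have : -lam * (k : ℝ) = (k : ℕ) * Real.log (1 - c / aV) := by
      rw [hlam]; push_cast; ring
    rw [this, Real.exp_nat_mul, Real.exp_log hρ]
  have h1 := (hsandwich (flow f x (ustar x) k)).1
  have h2 := key k
  rw [hexp, div_mul_eq_mul_div, div_mul_eq_mul_div, le_div_iff₀ hlamMin_pos]
  nlinarith [h1, h2]
end
end

section
/- Fix Δ > 0 and a compact set D ⊂ ℝⁿ containing the origin. Assume: (i) f is Lipschitz: ‖f(x,u) − f(y,w)‖ ≤ L_x‖x−y‖ + L_u‖u−w‖ for all x,y,u,w, and f(0, π⋆(0)) = 0 with π⋆(0) = 0; (ii) π⋆ : ℝⁿ → ℝᵐ is a continuous optimal feedback policy, i.e. V_γ^{π⋆} = V_γ; (iii) there is a_V > 0 with λ_min(Q)‖x‖² ≤ R/(1−γ) − V_γ(x) ≤ a_V‖x‖² for all x and all γ ∈ (0,1), and for γ ∈ (γ⋆, 1) with γ⋆ = a_V/(a_V + λ_min(Q)) there is c > 0 with V_γ(x) − V_γ(f(x, π⋆(x))) ≤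 −c‖x‖²; (iv) the closed-loop value functions depend continuously on the policy: for every η > 0 there is δ > 0 such that sup_{x∈D}‖π_φ(x) − π⋆(x)‖ < δ implies sup_{x∈D}|V_γ^{π_φ}(x) − V_γ(x)| < η; (v) closed-loop trajectories of the policies considered starting in D remain in D. Then there exist ε > 0, γ⋆ ∈ (0,1) and N ∈ ℕ such that for every γ ∈ (γ⋆, 1) and every continuous policy π_φ with π_φ(0) = 0 and sup_{x∈D}‖π_φ(x) − π⋆(x)‖ < ε, every closed-loop trajectory x_{k+1} = f(x_k, π_φ(x_k)) starting at any x ∈ D satisfies ‖x_k‖ ≤ Δ for all k ≥ N (practical stability). -/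
set_option autoImplicit false

open scoped Matrix

noncomputable section

/-- The closed-loop value function of a feedback policy `π`:
`V_γ^π(x₀) = Σ_k γ^k r(x_k, π(x_k))` where `x_{k+1} = f(x_k, π(x_k))`. -/
def Vcl {X U : Type*} (f : X → U → X) (r : X → U → ℝ) (γ : ℝ) (π : X → U) (x : X) : ℝ :=
  ∑' k : ℕ, γ ^ k * r ((fun y => f y (π y))^[k] x) (π ((fun y => f y (π y))^[k] x))

/-- Rayleigh-type lower bound: the quadratic form of a positive definite matrix is bounded
below by its least eigenvalue times the squared norm. -/
lemma rayleigh_lower {n : ℕ} (Q : Matrix (Fin n) (Fin n) ℝ) (hQ : Q.PosDef) {lam : ℝ}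
    (hlam : IsLeast (Set.range hQ.isHermitian.eigenvalues) lam) (x : Fin n → ℝ) :
    lam * (x ⬝ᵥ x) ≤ x ⬝ᵥ Q.mulVec x := by
  classical
  set H := hQ.isHermitian with hH
  set U : Matrix (Fin n) (Fin n) ℝ := (H.eigenvectorUnitary : Matrix (Fin n) (Fin n) ℝ) with hUdef
  have hU : U * star U = 1 := Matrix.mem_unitaryGroup_iff.mp H.eigenvectorUnitary.2
  have hdiag : Matrix.PosSemidef (Matrix.diagonal (fun i => H.eigenvalues i - lam)) :=
    Matrix.PosSemidef.diagonal fun i => sub_nonneg.2 (hlam.2 ⟨i, rfl⟩)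
  have hkey : Q - lam • (1 : Matrix (Fin n) (Fin n) ℝ)
      = U * Matrix.diagonal (fun i => H.eigenvalues i - lam) * star U := by
    have hspec := H.spectral_theorem
    have h1 : Matrix.diagonal (fun i => H.eigenvalues i - lam)
        = Matrix.diagonal (RCLike.ofReal ∘ H.eigenvalues) - lam • 1 := by
      rw [Matrix.smul_one_eq_diagonal, Matrix.diagonal_sub]
      rfl
    rw [h1, Matrix.mul_sub, Matrix.sub_mul, ← (hspec.trans (Unitary.conjStarAlgAut_apply _ _))]
    congr 1
    rw [Matrix.mul_smul, Matrix.smul_mul, Matrix.mul_one, hU]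
  have hP : Matrix.PosSemidef (Q - lam • (1 : Matrix (Fin n) (Fin n) ℝ)) := by
    rw [hkey, Matrix.star_eq_conjTranspose]; exact hdiag.mul_mul_conjTranspose_same U
  have h0 := hP.dotProduct_mulVec_nonneg x
  rw [star_trivial, Matrix.sub_mulVec, Matrix.smul_mulVec, Matrix.one_mulVec,
    dotProduct_sub, dotProduct_smul] at h0
  simp only [smul_eq_mul] at h0
  linarith

/-- One-step dynamic programming identity for the closed-loop value function. -/
lemma Vcl_step {X U : Type*} (f : X → U → X) (r : X → U → ℝ) (γ : ℝ) (π : X → U) (x : X)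
    (h : Summable fun k : ℕ =>
      γ ^ k * r ((fun y => f y (π y))^[k] x) (π ((fun y => f y (π y))^[k] x))) :
    Vcl f r γ π x = r x (π x) + γ * Vcl f r γ π (f x (π x)) := by
  unfold Vcl
  rw [h.tsum_eq_zero_add]
  simp only [Function.iterate_zero_apply, pow_zero, one_mul]
  congr 1
  have hiter : ∀ k : ℕ, (fun y => f y (π y))^[k + 1] x = (fun y => f y (π y))^[k] (f x (π x)) :=
    fun k => Function.iterate_succ_apply (fun y => f y (π y)) k x
  calc (∑' k : ℕ, γ ^ (k + 1) *
        r ((fun y => f y (π y))^[k + 1] x) (π ((fun y => f y (π y))^[k + 1] x)))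
      = ∑' k : ℕ, γ * (γ ^ k * r ((fun y => f y (π y))^[k] (f x (π x)))
          (π ((fun y => f y (π y))^[k] (f x (π x))))) := by
        refine tsum_congr fun k => ?_
        rw [hiter k]; ring
    _ = γ * ∑' k : ℕ, γ ^ k * r ((fun y => f y (π y))^[k] (f x (π x)))
          (π ((fun y => f y (π y))^[k] (f x (π x)))) := tsum_mul_left

/-- Geometric decay estimate for sequences satisfying a contraction-plus-offset recursion. -/
lemma geom_decay {θ d w0max : ℝ} (hθ0 : 0 ≤ θ) (hθ1 : θ < 1) (hd : 0 ≤ d)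
    (w : ℕ → ℝ) (hw0 : w 0 ≤ w0max) (hrec : ∀ k, w (k + 1) ≤ θ * w k + d) :
    ∀ k, w k ≤ θ ^ k * w0max + d / (1 - θ) := by
  intro k
  have h1θ : (0 : ℝ) < 1 - θ := by linarith
  induction k with
  | zero =>
    have : 0 ≤ d / (1 - θ) := div_nonneg hd h1θ.le
    simpa using by linarith
  | succ k ih =>
    have h2 : θ * w k ≤ θ * (θ ^ k * w0max + d / (1 - θ)) := mul_le_mul_of_nonneg_left ih hθ0
    have h3 : θ * (d / (1 - θ)) + d = d / (1 - θ) := by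
      field_simp
      ring
    calc w (k + 1) ≤ θ * w k + d := hrec k
      _ ≤ θ * (θ ^ k * w0max + d / (1 - θ)) + d := by linarith
      _ = θ ^ (k + 1) * w0max + (θ * (d / (1 - θ)) + d) := by ring
      _ = θ ^ (k + 1) * w0max + d / (1 - θ) := by rw [h3]

set_option maxHeartbeats 1600000 in
lemma dotProduct_self_eq_norm_sq {n : ℕ} (y : EuclideanSpace ℝ (Fin n)) :
    y ⬝ᵥ y = ‖y‖ ^ 2 := by
  rw [EuclideanSpace.norm_eq, Real.sq_sqrt (by positivity)]
  simp [dotProduct, Real.norm_eq_abs, sq_abs, sq]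

set_option maxHeartbeats 1600000 in
/-- Practical stability of near-optimal neural policies: under Lipschitz dynamics, an
optimal continuous feedback policy `π⋆` with quadratic value sandwich bounds and strict
value decrease, continuity of closed-loop values in the policy, and forward invariance
of the compact set `D`, there exist `ε > 0`, `γ⋆ ∈ (0,1)` and `N` such that every
continuous policy `π_φ` with `π_φ(0) = 0` that is `ε`-close to `π⋆` on `D` drives every
trajectory starting in `D` into the `Δ`-ball by time `N`, where it remains. -/
theorem practical_stability_of_near_optimal_policies
    {n m : ℕ}
    (f : EuclideanSpace ℝ (Fin n) → EuclideanSpace ℝ (Fin m) → EuclideanSpace ℝ (Fin n))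
    (Q : Matrix (Fin n) (Fin n) ℝ) (hQ : Q.PosDef)
    (R : ℝ) (hR : 0 < R)
    (r : EuclideanSpace ℝ (Fin n) → EuclideanSpace ℝ (Fin m) → ℝ)
    (hr : ∀ x u, r x u = R - x ⬝ᵥ Q.mulVec x)
    (lamMin : ℝ) (hlamMin : IsLeast (Set.range hQ.isHermitian.eigenvalues) lamMin)
    (D : Set (EuclideanSpace ℝ (Fin n))) (hD : IsCompact D)
    (hD0 : (0 : EuclideanSpace ℝ (Fin n)) ∈ D)
    (Δ : ℝ) (hΔ : 0 < Δ)
    -- (i): Lipschitz dynamics, vanishing at the origin under `π⋆`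
    (Lx Lu : ℝ)
    (hLip : ∀ x y : EuclideanSpace ℝ (Fin n), ∀ u w : EuclideanSpace ℝ (Fin m),
      ‖f x u - f y w‖ ≤ Lx * ‖x - y‖ + Lu * ‖u - w‖)
    (πs : EuclideanSpace ℝ (Fin n) → EuclideanSpace ℝ (Fin m))
    (hπs0 : πs 0 = 0) (hf0 : f 0 (πs 0) = 0)
    -- (ii): `π⋆` is a continuous optimal feedback policy
    (hπscont : Continuous πs)
    (hπsopt : ∀ γ ∈ Set.Ioo (0 : ℝ) 1, ∀ x, Vcl f r γ πs x = Vopt f r γ x)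
    -- (iii): quadratic sandwich bounds and strict decrease for `γ > γ⋆`
    (aV : ℝ) (haV : 0 < aV)
    (hsandwich : ∀ γ ∈ Set.Ioo (0 : ℝ) 1, ∀ x : EuclideanSpace ℝ (Fin n),
      lamMin * ‖x‖ ^ 2 ≤ R / (1 - γ) - Vopt f r γ x ∧
        R / (1 - γ) - Vopt f r γ x ≤ aV * ‖x‖ ^ 2)
    (hdec : ∀ γ ∈ Set.Ioo (aV / (aV + lamMin)) 1, ∃ c > 0,
      ∀ x : EuclideanSpace ℝ (Fin n),
        Vopt f r γ x - Vopt f r γ (f x (πs x)) ≤ -c * ‖x‖ ^ 2)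
    -- (iv): the closed-loop value functions depend continuously on the policy
    (hVcont : ∀ γ ∈ Set.Ioo (aV / (aV + lamMin)) 1, ∀ η > 0, ∃ δ > 0,
      ∀ πφ : EuclideanSpace ℝ (Fin n) → EuclideanSpace ℝ (Fin m),
        Continuous πφ → πφ 0 = 0 →
        (∀ x ∈ D, ‖πφ x - πs x‖ < δ) →
        ∀ x ∈ D, |Vcl f r γ πφ x - Vopt f r γ x| < η)
    -- (v): closed-loop trajectories of the policies considered remain in `D`
    (hinv : ∀ πφ : EuclideanSpace ℝ (Fin n) → EuclideanSpace ℝ (Fin m),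
      Continuous πφ → πφ 0 = 0 →
      ∀ x ∈ D, ∀ k : ℕ, (fun y => f y (πφ y))^[k] x ∈ D) :
    ∃ ε > 0, ∃ γstar ∈ Set.Ioo (0 : ℝ) 1, ∃ N : ℕ,
      ∀ γ ∈ Set.Ioo γstar 1,
        ∀ πφ : EuclideanSpace ℝ (Fin n) → EuclideanSpace ℝ (Fin m),
          Continuous πφ → πφ 0 = 0 →
          (∀ x ∈ D, ‖πφ x - πs x‖ < ε) →
          ∀ x ∈ D, ∀ k ≥ N, ‖(fun y => f y (πφ y))^[k] x‖ ≤ Δ := by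
  classical
  obtain ⟨⟨i0, hi0⟩, hlb⟩ := id hlamMin
  have hlam_pos : 0 < lamMin := hi0 ▸ hQ.eigenvalues_pos i0
  set a : ℝ := min lamMin aV with ha
  have ha_pos : 0 < a := lt_min hlam_pos haV
  have hab : a ≤ aV := min_le_right _ _
  have haa : a ≤ lamMin := min_le_left _ _
  set gs : ℝ := aV / (aV + lamMin) with hgs
  have hgs0 : 0 < gs := div_pos haV (by linarith)
  have hgs1 : gs < 1 := (div_lt_one (by linarith)).2 (by linarith)
  set M0 : ℝ := max gs (1 - a / aV) with hM0
  have hM0lt1 : M0 < 1 := by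
    apply max_lt hgs1
    have : 0 < a / aV := div_pos ha_pos haV
    linarith
  have hM0pos : 0 < M0 := lt_of_lt_of_le hgs0 (le_max_left _ _)
  set γ₀ : ℝ := (M0 + 1) / 2 with hγ₀
  have hγ₀M0 : M0 < γ₀ := by rw [hγ₀]; linarith
  have hγ₀1 : γ₀ < 1 := by rw [hγ₀]; linarith
  have hγ₀pos : 0 < γ₀ := lt_trans hM0pos hγ₀M0
  have hγ₀gs : gs < γ₀ := lt_of_le_of_lt (le_max_left _ _) hγ₀M0
  have hγ₀a : 1 - a / aV < γ₀ := lt_of_le_of_lt (le_max_right _ _) hγ₀M0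
  have hγ₀mem : γ₀ ∈ Set.Ioo gs 1 := ⟨hγ₀gs, hγ₀1⟩
  have hγ₀mem01 : γ₀ ∈ Set.Ioo (0 : ℝ) 1 := ⟨hγ₀pos, hγ₀1⟩
  set θ : ℝ := (1 - a / aV) / γ₀ with hθ
  have hθ0 : 0 ≤ θ := div_nonneg (by
    have : a / aV ≤ 1 := (div_le_one haV).2 hab
    linarith) hγ₀pos.le
  have hθ1 : θ < 1 := (div_lt_one hγ₀pos).2 hγ₀a
  have h1θ : 0 < 1 - θ := by linarith
  set K : ℝ := a / (aV * γ₀ * (1 - θ)) with hK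
  have hKpos : 0 < K := div_pos ha_pos (by positivity)
  set η : ℝ := a * Δ ^ 2 / (2 * (K + 1)) with hη
  have hηpos : 0 < η := div_pos (by positivity) (by positivity)
  set d : ℝ := a / aV * η / γ₀ with hd
  have hd0 : 0 ≤ d := by positivity
  have hdK : d / (1 - θ) = η * K := by
    rw [hd, hK]
    field_simp
  have hηK : η * K + η = a * Δ ^ 2 / 2 := by
    rw [hη]
    field_simp
  -- bound on D
  obtain ⟨RD, hRD⟩ : ∃ C : ℝ, ∀ x ∈ D, ‖x‖ ≤ C := by
    obtain ⟨C, hC⟩ := hD.exists_bound_of_continuousOn continuousOn_id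
    exact ⟨C, fun x hx => hC x hx⟩
  have hRD0 : 0 ≤ RD := le_trans (norm_nonneg _) (hRD 0 hD0)
  set w0max : ℝ := aV * RD ^ 2 + η with hw0max
  have hw0maxpos : 0 < w0max := by positivity
  clear_value a gs M0 γ₀ θ K η d w0max
  -- choose N
  obtain ⟨N, hN⟩ := exists_pow_lt_of_lt_one (div_pos (by positivity : (0:ℝ) < a * Δ ^ 2 / 2)
    hw0maxpos) hθ1
  have hNbound : θ ^ N * w0max ≤ a * Δ ^ 2 / 2 := by
    have := (lt_div_iff₀ hw0maxpos).1 hN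
    linarith
  -- choose ε from value continuity
  obtain ⟨ε, hεpos, hεspec⟩ := hVcont γ₀ hγ₀mem η hηpos
  -- bound on |r| over D
  have hqcont : Continuous fun y : EuclideanSpace ℝ (Fin n) =>
      dotProduct (fun i => y i) (Q.mulVec fun i => y i) := by
    simp only [dotProduct, Matrix.mulVec]
    refine continuous_finset_sum _ fun i _ => ?_
    exact ((continuous_apply i).comp (PiLp.continuous_ofLp 2 _)).mul
      (continuous_finset_sum _ fun j _ => continuous_const.mul
        ((continuous_apply j).comp (PiLp.continuous_ofLp 2 _)))
  obtain ⟨Mq, hMq⟩ := hD.exists_bound_of_continuousOn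
    ((continuous_const.sub hqcont).continuousOn :
      ContinuousOn (fun y : EuclideanSpace ℝ (Fin n) =>
        R - dotProduct (fun i => y i) (Q.mulVec fun i => y i)) D)
  refine ⟨ε, hεpos, γ₀, hγ₀mem01, N, ?_⟩
  intro γ hγ πφ hφcont hφ0 hclose x hx k hk
  set F : EuclideanSpace ℝ (Fin n) → EuclideanSpace ℝ (Fin n) := fun y => f y (πφ y) with hF
  have htraj : ∀ j : ℕ, F^[j] x ∈ D := fun j => hinv πφ hφcont hφ0 x hx j
  -- summability of the closed-loop objective from any point of D
  have hsummable : ∀ y ∈ D, Summable fun j : ℕ =>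
      γ₀ ^ j * r (F^[j] y) (πφ (F^[j] y)) := by
    intro y hy
    refine Summable.of_norm_bounded (g := fun j => |Mq| * γ₀ ^ j)
      ((summable_geometric_of_lt_one hγ₀pos.le hγ₀1).mul_left _) fun j => ?_
    have hyj : F^[j] y ∈ D := hinv πφ hφcont hφ0 y hy j
    have hb := hMq _ hyj
    rw [Real.norm_eq_abs, abs_mul, abs_pow, abs_of_pos hγ₀pos, hr]
    rw [Real.norm_eq_abs] at hb
    calc γ₀ ^ j * |R - (F^[j] y) ⬝ᵥ Q.mulVec (F^[j] y)|
        ≤ γ₀ ^ j * |Mq| := by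
          refine mul_le_mul_of_nonneg_left ?_ (by positivity)
          exact le_trans hb (le_abs_self _)
      _ = |Mq| * γ₀ ^ j := by ring
  -- the Lyapunov-type function along the trajectory
  set W : EuclideanSpace ℝ (Fin n) → ℝ := fun y => R / (1 - γ₀) - Vcl f r γ₀ πφ y with hW
  -- W is within η of the optimal gap, which is sandwiched
  have hWsand : ∀ y ∈ D, a * ‖y‖ ^ 2 - η ≤ W y ∧ W y ≤ aV * ‖y‖ ^ 2 + η := by
    intro y hy
    have h1 := abs_lt.1 (hεspec πφ hφcont hφ0 hclose y hy)
    have h2 := hsandwich γ₀ hγ₀mem01 y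
    have h4 : a * ‖y‖ ^ 2 ≤ lamMin * ‖y‖ ^ 2 :=
      mul_le_mul_of_nonneg_right haa (sq_nonneg _)
    simp only [hW]
    constructor
    · linarith [h1.1, h1.2, h2.1]
    · linarith [h1.1, h1.2, h2.2]
  -- one-step decrease
  have hstep : ∀ y ∈ D, W (F y) ≤ θ * W y + d := by
    intro y hy
    have hbell : Vcl f r γ₀ πφ y = r y (πφ y) + γ₀ * Vcl f r γ₀ πφ (F y) :=
      Vcl_step f r γ₀ πφ y (hsummable y hy)
    have hq : lamMin * ‖y‖ ^ 2 ≤ y ⬝ᵥ Q.mulVec y := by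
      have h := rayleigh_lower Q hQ hlamMin y
      rwa [dotProduct_self_eq_norm_sq y] at h
    have hqlow : a * ‖y‖ ^ 2 ≤ y ⬝ᵥ Q.mulVec y := by
      have h4 : a * ‖y‖ ^ 2 ≤ lamMin * ‖y‖ ^ 2 :=
        mul_le_mul_of_nonneg_right haa (sq_nonneg _)
      linarith
    have hWeq : γ₀ * W (F y) = W y - y ⬝ᵥ Q.mulVec y := by
      simp only [hW]
      rw [hbell, hr]
      have h1γ : (1 : ℝ) - γ₀ ≠ 0 := by linarith
      field_simp
      ring
    have hWup : W y ≤ aV * ‖y‖ ^ 2 + η := (hWsand y hy).2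
    -- γ₀ * W (F y) ≤ (1 - a/aV) * W y + (a/aV) * η
    have hkey : γ₀ * W (F y) ≤ (1 - a / aV) * W y + a / aV * η := by
      have hyn : (W y - η) / aV ≤ ‖y‖ ^ 2 := by
        rw [div_le_iff₀ haV]
        nlinarith
      have : a * ((W y - η) / aV) ≤ a * ‖y‖ ^ 2 := mul_le_mul_of_nonneg_left hyn ha_pos.le
      rw [hWeq]
      have h5 : a / aV * (W y - η) ≤ a * ‖y‖ ^ 2 := by
        calc a / aV * (W y - η) = a * ((W y - η) / aV) := by ring
          _ ≤ a * ‖y‖ ^ 2 := this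
      linarith [hqlow, h5]
    have hγ₀ne : γ₀ ≠ 0 := ne_of_gt hγ₀pos
    have hθγ : θ * γ₀ = 1 - a / aV := by
      rw [hθ]; field_simp
    have hdγ : d * γ₀ = a / aV * η := by
      rw [hd]; field_simp
    have : γ₀ * W (F y) ≤ γ₀ * (θ * W y + d) := by
      rw [mul_add]
      calc γ₀ * W (F y) ≤ (1 - a / aV) * W y + a / aV * η := hkey
        _ = θ * γ₀ * W y + d * γ₀ := by rw [hθγ, hdγ]
        _ = γ₀ * (θ * W y) + γ₀ * d := by ring
    exact le_of_mul_le_mul_left this hγ₀pos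
  -- the sequence w
  set w : ℕ → ℝ := fun j => W (F^[j] x) with hwdef
  have hw0 : w 0 ≤ w0max := by
    have h6 := (hWsand x hx).2
    have hxn : ‖x‖ ≤ RD := hRD x hx
    have hxsq : ‖x‖ ^ 2 ≤ RD ^ 2 := pow_le_pow_left₀ (norm_nonneg x) hxn 2
    have h7 : aV * ‖x‖ ^ 2 ≤ aV * RD ^ 2 := mul_le_mul_of_nonneg_left hxsq haV.le
    have h8 : W x ≤ aV * RD ^ 2 + η := by linarith
    simpa [hwdef, hw0max] using h8
  have hrec : ∀ j, w (j + 1) ≤ θ * w j + d := by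
    intro j
    have h1 : F^[j + 1] x = F (F^[j] x) := Function.iterate_succ_apply' F j x
    have := hstep (F^[j] x) (htraj j)
    simpa [hwdef, h1] using this
  have hdecay := geom_decay hθ0 hθ1 hd0 w hw0 hrec
  -- conclude
  have hklow : a * ‖F^[k] x‖ ^ 2 - η ≤ W (F^[k] x) := (hWsand (F^[k] x) (htraj k)).1
  have hθk : θ ^ k ≤ θ ^ N := pow_le_pow_of_le_one hθ0 hθ1.le hk
  have hθkb : θ ^ k * w0max ≤ θ ^ N * w0max :=
    mul_le_mul_of_nonneg_right hθk hw0maxpos.le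
  have hfinal : a * ‖F^[k] x‖ ^ 2 ≤ a * Δ ^ 2 := by
    have h1 := hdecay k
    rw [hdK] at h1
    simp only [hwdef] at h1
    linarith [hklow, hθkb, hNbound, hηK, h1]
  have hnn : ‖F^[k] x‖ ^ 2 ≤ Δ ^ 2 := by
    have := le_of_mul_le_mul_left hfinal ha_pos
    exact this
  have : ‖F^[k] x‖ ≤ Δ := by
    nlinarith [norm_nonneg (F^[k] x), hΔ, hnn]
  exact this
end
end

section
/- Let u be a control sequence and x₀ an initial state whose trajectory x_k = Ψ(k, x₀, u) satisfies x_kᵀQx_k ≤ 1 for all k ≥ 0 (so each per-step reward is nonnegative) and ‖x_k‖ ≤ ε' for all k ≥ N for some N ∈ ℕ and ε' > 0. Then for every γ ∈ (0,1), the discounted objective satisfies J_γ^u(x₀) = Σ_{k=0}^∞ γᵏ (1 − x_kᵀQx_k) ≥ γ^N (1 − λ_max(Q)ε'²)/(1−γ). -/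
set_option autoImplicit false

open scoped Matrix

noncomputable section

lemma rayleigh_aux {n : ℕ} {Q : Matrix (Fin n) (Fin n) ℝ} (hQ : Q.IsHermitian)
    {lamMax : ℝ} (h : ∀ i, hQ.eigenvalues i ≤ lamMax)
    (x : EuclideanSpace ℝ (Fin n)) :
    (WithLp.ofLp x) ⬝ᵥ Q.mulVec (WithLp.ofLp x) ≤ lamMax * ‖x‖ ^ 2 := by
  classical
  set b := hQ.eigenvectorBasis with hb
  have hdot : ∀ y z : EuclideanSpace ℝ (Fin n), (inner ℝ y z : ℝ) = (WithLp.ofLp y) ⬝ᵥ WithLp.ofLp z := by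
    intro y z; rw [EuclideanSpace.inner_eq_star_dotProduct, star_trivial, dotProduct_comm]
  have key : ∀ i, (inner ℝ (b i) (WithLp.toLp 2 (Q.mulVec (WithLp.ofLp x))) : ℝ)
      = hQ.eigenvalues i * inner ℝ (b i) x := by
    intro i
    have hsymm : Qᵀ = Q := by simpa using hQ.eq
    rw [hdot, hdot]
    have h2 : (WithLp.ofLp (b i)) ⬝ᵥ WithLp.ofLp (WithLp.toLp 2 (Q.mulVec (WithLp.ofLp x)))
        = Q.mulVec (WithLp.ofLp (b i)) ⬝ᵥ (WithLp.ofLp x) := by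
      rw [Matrix.dotProduct_mulVec, ← Matrix.mulVec_transpose, hsymm]
    rw [h2]
    have h3 : Q *ᵥ (WithLp.ofLp (b i))
        = hQ.eigenvalues i • (WithLp.ofLp (b i)) :=
      hQ.mulVec_eigenvectorBasis i
    erw [h3, smul_dotProduct]
    simp
  have expand := (b.sum_inner_mul_inner x (WithLp.toLp 2 (Q.mulVec (WithLp.ofLp x))))
  have hx : (inner ℝ x (WithLp.toLp 2 (Q.mulVec (WithLp.ofLp x))) : ℝ)
      = (WithLp.ofLp x) ⬝ᵥ Q.mulVec (WithLp.ofLp x) := hdot _ _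
  rw [hx] at expand
  have parseval : ∑ i, (inner ℝ (b i) x : ℝ) ^ 2 = ‖x‖ ^ 2 := by
    have := b.sum_inner_mul_inner x x
    rw [real_inner_self_eq_norm_sq] at this
    rw [← this]
    refine Finset.sum_congr rfl fun i _ => ?_
    rw [sq, real_inner_comm]
  calc (WithLp.ofLp x) ⬝ᵥ Q.mulVec (WithLp.ofLp x)
      = ∑ i, (inner ℝ x (b i) : ℝ) * (hQ.eigenvalues i * inner ℝ (b i) x) := by
        rw [← expand]; exact Finset.sum_congr rfl fun i _ => by rw [key]
    _ = ∑ i, hQ.eigenvalues i * (inner ℝ (b i) x : ℝ) ^ 2 := by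
        refine Finset.sum_congr rfl fun i _ => ?_
        rw [real_inner_comm x (b i)]; ring
    _ ≤ ∑ i, lamMax * (inner ℝ (b i) x : ℝ) ^ 2 := by
        refine Finset.sum_le_sum fun i _ => ?_
        exact mul_le_mul_of_nonneg_right (h i) (sq_nonneg _)
    _ = lamMax * ‖x‖ ^ 2 := by rw [← Finset.mul_sum, parseval]

/-- If the per-step rewards `1 − x_kᵀQx_k` are nonnegative along the trajectory and
`‖x_k‖ ≤ ε'` for all `k ≥ N`, then the discounted objective
`J_γ^u(x₀) = Σ_k γ^k (1 − x_kᵀQx_k)` is at least `γ^N (1 − λ_max(Q)ε'²)/(1−γ)`. -/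
theorem objective_lower_bound_after_entering_ball
    {n m : ℕ}
    (f : EuclideanSpace ℝ (Fin n) → EuclideanSpace ℝ (Fin m) → EuclideanSpace ℝ (Fin n))
    (Q : Matrix (Fin n) (Fin n) ℝ) (hQ : Q.PosDef)
    (lamMax : ℝ) (hlamMax : IsGreatest (Set.range hQ.isHermitian.eigenvalues) lamMax)
    (u : ℕ → EuclideanSpace ℝ (Fin m)) (x₀ : EuclideanSpace ℝ (Fin n))
    (hbdd : ∀ k : ℕ, (WithLp.ofLp (flow f x₀ u k)) ⬝ᵥ Q.mulVec (WithLp.ofLp (flow f x₀ u k)) ≤ 1)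
    (N : ℕ) (ε' : ℝ) (hε' : 0 < ε')
    (hin : ∀ k ≥ N, ‖flow f x₀ u k‖ ≤ ε')
    (γ : ℝ) (hγ : γ ∈ Set.Ioo (0 : ℝ) 1) :
    γ ^ N * (1 - lamMax * ε' ^ 2) / (1 - γ)
      ≤ ∑' k : ℕ, γ ^ k * (1 - (WithLp.ofLp (flow f x₀ u k)) ⬝ᵥ Q.mulVec (WithLp.ofLp (flow f x₀ u k))) := by
  obtain ⟨hγ0, hγ1⟩ := hγ
  set x : ℕ → EuclideanSpace ℝ (Fin n) := flow f x₀ u with hxdef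
  set a : ℕ → ℝ := fun k => γ ^ k * (1 - (x k) ⬝ᵥ Q.mulVec (x k)) with ha
  set c : ℝ := 1 - lamMax * ε' ^ 2 with hc
  have hlam_bdd : ∀ i, hQ.isHermitian.eigenvalues i ≤ lamMax := fun i =>
    hlamMax.2 ⟨i, rfl⟩
  have hlam_nonneg : 0 ≤ lamMax := by
    obtain ⟨i, hi⟩ := hlamMax.1
    exact hi ▸ hQ.posSemidef.eigenvalues_nonneg i
  -- rewards are in [0, 1]
  have hq_nonneg : ∀ k, 0 ≤ (x k) ⬝ᵥ Q.mulVec (x k) := by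
    intro k
    have := hQ.posSemidef.re_dotProduct_nonneg (x k)
    simpa using this
  have hr_nonneg : ∀ k, 0 ≤ 1 - (x k) ⬝ᵥ Q.mulVec (x k) := fun k => by
    linarith [hbdd k]
  have hr_le_one : ∀ k, 1 - (x k) ⬝ᵥ Q.mulVec (x k) ≤ 1 := fun k => by
    linarith [hq_nonneg k]
  have ha_nonneg : ∀ k, 0 ≤ a k := fun k =>
    mul_nonneg (pow_nonneg hγ0.le k) (hr_nonneg k)
  have ha_le : ∀ k, a k ≤ γ ^ k := fun k => by
    have := mul_le_mul_of_nonneg_left (hr_le_one k) (pow_nonneg hγ0.le k)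
    simpa [ha] using this
  have hsum_geo : Summable fun k : ℕ => γ ^ k :=
    summable_geometric_of_lt_one hγ0.le hγ1
  have ha_summable : Summable a :=
    Summable.of_nonneg_of_le ha_nonneg ha_le hsum_geo
  -- tail bound: for k ≥ N, reward ≥ c
  have htail : ∀ k, c ≤ 1 - (x (k + N)) ⬝ᵥ Q.mulVec (x (k + N)) := by
    intro k
    have hball : ‖x (k + N)‖ ≤ ε' := hin (k + N) (Nat.le_add_left N k)
    have hray := rayleigh_aux hQ.isHermitian hlam_bdd (x (k + N))
    have hnorm : ‖x (k + N)‖ ^ 2 ≤ ε' ^ 2 :=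
      pow_le_pow_left₀ (norm_nonneg _) hball 2
    have : (x (k + N)) ⬝ᵥ Q.mulVec (x (k + N)) ≤ lamMax * ε' ^ 2 :=
      hray.trans (mul_le_mul_of_nonneg_left hnorm hlam_nonneg)
    rw [hc]; linarith
  -- geometric tail sum
  have hgeo_shift : Summable (fun k : ℕ => γ ^ (k + N) * c) := by
    have : (fun k : ℕ => γ ^ (k + N) * c) = fun k => (γ ^ N * c) * γ ^ k := by
      funext k; rw [pow_add]; ring
    rw [this]
    exact hsum_geo.mul_left _
  have hgeo_val : ∑' k : ℕ, γ ^ (k + N) * c = γ ^ N * c / (1 - γ) := by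
    have h1 : (fun k : ℕ => γ ^ (k + N) * c) = fun k => (γ ^ N * c) * γ ^ k := by
      funext k; rw [pow_add]; ring
    rw [h1, tsum_mul_left, tsum_geometric_of_lt_one hγ0.le hγ1]
    field_simp
  have hshift_summable : Summable (fun k : ℕ => a (k + N)) :=
    (summable_nat_add_iff N).mpr ha_summable
  have step1 : ∑' k : ℕ, γ ^ (k + N) * c ≤ ∑' k : ℕ, a (k + N) := by
    refine Summable.tsum_le_tsum (fun k => ?_) hgeo_shift hshift_summable
    exact mul_le_mul_of_nonneg_left (htail k) (pow_nonneg hγ0.le _)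
  have step2 : ∑' k : ℕ, a (k + N) ≤ ∑' k : ℕ, a k := by
    have := Summable.sum_add_tsum_nat_add (f := a) N ha_summable
    have hfin : 0 ≤ ∑ i ∈ Finset.range N, a i :=
      Finset.sum_nonneg fun i _ => ha_nonneg i
    linarith
  calc γ ^ N * c / (1 - γ) = ∑' k : ℕ, γ ^ (k + N) * c := hgeo_val.symm
    _ ≤ ∑' k : ℕ, a (k + N) := step1
    _ ≤ ∑' k : ℕ, a k := step2
end
end
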